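/- Let a, c, k ∈ ℝ with k > 0, c < 0 and k² < c² − 4a. Set s := √(c² − 4a), γ := s/√(s² − k²), and define u : ℝ → ℝ by u(z) := k²/(√(s² − k²)·(γ − cos(k z))) − (s + c)/2. Then (1/2)·∫₀^{2π/k} u(z)² dz = −cπ + (π/(4k))·(√(c² − 4a) + c)². -/

import Mathlib

open Real

lemma arctan_part (γ b r : ℝ) (hγ : 1 < γ) (hb : 0 < b)
    (hb2 : b ^ 2 = γ ^ 2 - 1) (hr : r = γ - b) (θ : ℝ) :
    HasDerivAt (fun x : ℝ => x + 2 * Real.arctan (r * Real.sin x / (1 - r * Real.cos x)))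
      (b / (γ - Real.cos θ)) θ := by
  subst hr
  have hbγ : b < γ := by nlinarith
  have hr0 : 0 < γ - b := by linarith
  have hr1 : γ - b < 1 := by nlinarith
  have hQ : 0 < 1 - (γ - b) * Real.cos θ := by
    nlinarith [Real.neg_one_le_cos θ, Real.cos_le_one θ]
  have hD : 0 < γ - Real.cos θ := by nlinarith [Real.cos_le_one θ]
  have hR : 0 < 1 + (γ - b) ^ 2 - 2 * (γ - b) * Real.cos θ := by
    nlinarith [Real.cos_le_one θ, sq_nonneg (1 - (γ - b))]
  have hp := Real.sin_sq_add_cos_sq θ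
  have h1 : HasDerivAt (fun x : ℝ => (γ - b) * Real.sin x) ((γ - b) * Real.cos θ) θ :=
    (Real.hasDerivAt_sin θ).const_mul (γ - b)
  have h2 : HasDerivAt (fun x : ℝ => 1 - (γ - b) * Real.cos x) ((γ - b) * Real.sin θ) θ := by
    simpa using ((Real.hasDerivAt_cos θ).const_mul (γ - b)).const_sub 1
  have hg : HasDerivAt (fun x : ℝ => (γ - b) * Real.sin x / (1 - (γ - b) * Real.cos x))
      ((γ - b) * (Real.cos θ - (γ - b)) / (1 - (γ - b) * Real.cos θ) ^ 2) θ := by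
    refine (h1.div h2 hQ.ne').congr_deriv ?_
    field_simp
    ring_nf
    linear_combination (b - γ) * hp
  have harc : HasDerivAt
      (fun x : ℝ => Real.arctan ((γ - b) * Real.sin x / (1 - (γ - b) * Real.cos x)))
      ((γ - b) * (Real.cos θ - (γ - b)) / (1 + (γ - b) ^ 2 - 2 * (γ - b) * Real.cos θ)) θ := by
    have h := hg.arctan
    refine h.congr_deriv ?_
    have h1g : 1 + ((γ - b) * Real.sin θ / (1 - (γ - b) * Real.cos θ)) ^ 2
        = (1 + (γ - b) ^ 2 - 2 * (γ - b) * Real.cos θ) / (1 - (γ - b) * Real.cos θ) ^ 2 := by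
      field_simp
      ring_nf
      linear_combination ((γ - b) ^ 2) * hp
    rw [h1g]
    field_simp
  have hsum := (hasDerivAt_id θ).add (harc.const_mul 2)
  refine hsum.congr_deriv ?_
  field_simp
  ring_nf
  linear_combination (γ - b - Real.cos θ) * hb2

lemma sin_part (γ : ℝ) (hγ : 1 < γ) (θ : ℝ) :
    HasDerivAt (fun x : ℝ => Real.sin x / (γ - Real.cos x))
      ((γ * Real.cos θ - 1) / (γ - Real.cos θ) ^ 2) θ := by
  have hD : 0 < γ - Real.cos θ := by nlinarith [Real.cos_le_one θ]
  have h2 : HasDerivAt (fun x : ℝ => γ - Real.cos x) (Real.sin θ) θ := by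
    simpa using (Real.hasDerivAt_cos θ).const_sub γ
  refine ((Real.hasDerivAt_sin θ).div h2 hD.ne').congr_deriv ?_
  have hp := Real.sin_sq_add_cos_sq θ
  field_simp
  ring_nf
  linear_combination (-1) * hp

lemma deriv_ident (γ b m c cz : ℝ) (hm0 : m ≠ 0) (hD : γ - cz ≠ 0)
    (hb2 : b ^ 2 = γ ^ 2 - 1) :
    ((b * m) ^ 2 / (m * (γ - cz)) - (γ * m + c) / 2) ^ 2
      = -c * (b / (γ - cz) * (b * m))
        + (b * m) * ((γ * cz - 1) / (γ - cz) ^ 2 * (b * m)) + ((γ * m + c) / 2) ^ 2 := by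
  field_simp
  ring_nf
  linear_combination (4 * b ^ 2 * m ^ 2) * hb2

theorem stmt_11 (a c k : ℝ) (hk : 0 < k) (hc : c < 0) (hlt : k ^ 2 < c ^ 2 - 4 * a)
    (s γ : ℝ) (hs : s = Real.sqrt (c ^ 2 - 4 * a))
    (hγ : γ = s / Real.sqrt (s ^ 2 - k ^ 2))
    (u : ℝ → ℝ)
    (hu : ∀ z : ℝ, u z
      = k ^ 2 / (Real.sqrt (s ^ 2 - k ^ 2) * (γ - Real.cos (k * z))) - (s + c) / 2) :
    (1 / 2) * ∫ z in (0:ℝ)..(2 * Real.pi / k), (u z) ^ 2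
      = -c * Real.pi + (Real.pi / (4 * k)) * (Real.sqrt (c ^ 2 - 4 * a) + c) ^ 2 := by
  set m : ℝ := Real.sqrt (s ^ 2 - k ^ 2) with hm
  have hca : 0 < c ^ 2 - 4 * a := lt_of_le_of_lt (sq_nonneg k) hlt
  have hs0 : 0 < s := by rw [hs]; exact Real.sqrt_pos.2 hca
  have hs2 : s ^ 2 = c ^ 2 - 4 * a := by rw [hs]; exact Real.sq_sqrt hca.le
  have hks : k < s := by nlinarith
  have hm0 : 0 < m := by rw [hm]; apply Real.sqrt_pos.2; nlinarith
  have hm2 : m ^ 2 = s ^ 2 - k ^ 2 := by rw [hm]; apply Real.sq_sqrt; nlinarith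
  have hms : m < s := by nlinarith
  have hγ1 : 1 < γ := by rw [hγ, one_lt_div hm0]; exact hms
  have hγm : γ * m = s := by rw [hγ]; field_simp
  set b : ℝ := k / m with hb
  have hb0 : 0 < b := div_pos hk hm0
  have hbm : b * m = k := by rw [hb]; field_simp
  have hb2 : b ^ 2 = γ ^ 2 - 1 := by
    rw [hb, hγ]
    field_simp
    linear_combination hm2
  set B : ℝ := (s + c) / 2 with hB
  set Φ : ℝ → ℝ := fun z =>
    -c * (k * z + 2 * Real.arctan ((γ - b) * Real.sin (k * z) / (1 - (γ - b) * Real.cos (k * z))))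
      + k * (Real.sin (k * z) / (γ - Real.cos (k * z))) + B ^ 2 * z with hΦ
  have key : ∀ z : ℝ, HasDerivAt Φ (u z ^ 2) z := by
    intro z
    have hD : 0 < γ - Real.cos (k * z) := by nlinarith [Real.cos_le_one (k * z)]
    have hkz : HasDerivAt (fun z : ℝ => k * z) k z := by
      simpa using (hasDerivAt_id z).const_mul k
    have h1 : HasDerivAt (fun z : ℝ => k * z + 2 * Real.arctan
        ((γ - b) * Real.sin (k * z) / (1 - (γ - b) * Real.cos (k * z))))
        (b / (γ - Real.cos (k * z)) * k) z := by
      have := (arctan_part γ b (γ - b) hγ1 hb0 hb2 rfl (k * z)).comp z hkz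
      exact this
    have h2 : HasDerivAt (fun z : ℝ => Real.sin (k * z) / (γ - Real.cos (k * z)))
        ((γ * Real.cos (k * z) - 1) / (γ - Real.cos (k * z)) ^ 2 * k) z := by
      have := (sin_part γ hγ1 (k * z)).comp z hkz
      exact this
    have h3 : HasDerivAt (fun z : ℝ => B ^ 2 * z) (B ^ 2) z := by
      simpa using (hasDerivAt_id z).const_mul (B ^ 2)
    have H := ((h1.const_mul (-c)).add (h2.const_mul k)).add h3
    refine H.congr_deriv ?_
    symm
    rw [hu z]
    have hid := deriv_ident γ b m c (Real.cos (k * z)) hm0.ne' hD.ne' hb2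
    rw [hbm, hγm, ← hB] at hid
    exact hid
  have hcont : Continuous u := by
    have : u = fun z => k ^ 2 / (m * (γ - Real.cos (k * z))) - (s + c) / 2 := funext hu
    rw [this]
    apply Continuous.sub _ continuous_const
    apply continuous_const.div
    · exact continuous_const.mul
        (continuous_const.sub (Real.continuous_cos.comp (continuous_const.mul continuous_id)))
    intro z
    have hD : 0 < γ - Real.cos (k * z) := by nlinarith [Real.cos_le_one (k * z)]
    positivity
  have hint : ∫ z in (0:ℝ)..(2 * Real.pi / k), u z ^ 2 = Φ (2 * Real.pi / k) - Φ 0 :=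
    intervalIntegral.integral_eq_sub_of_hasDerivAt (fun z _ => key z)
      ((hcont.pow 2).intervalIntegrable _ _)
  have hΦ0 : Φ 0 = 0 := by simp [hΦ]
  have hΦT : Φ (2 * Real.pi / k) = -c * (2 * Real.pi) + B ^ 2 * (2 * Real.pi / k) := by
    rw [hΦ]
    have : k * (2 * Real.pi / k) = 2 * Real.pi := by field_simp
    simp [this, Real.sin_two_pi, Real.cos_two_pi]
  rw [hint, hΦ0, hΦT, ← hs, hB]
  field_simp
  ring
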